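/- arXiv:2602.10463 — 3 statements merged into one kernel-verified Lean document; each statement's English description precedes it below -/
import Mathlib

section
/- Let a, b, θ be real numbers with a ≥ b > 0 and 1 < θ ≤ 2. Then (a+b)^θ ≥ a^θ + θ·b^θ. -/
/-- Let `a, b, θ` be real numbers with `a ≥ b > 0` and `1 < θ ≤ 2`.
Then `(a+b)^θ ≥ a^θ + θ·b^θ`, where powers are real powers. -/
theorem rpow_add_ge_rpow_add_mul_rpow (a b θ : ℝ) (hab : a ≥ b) (hb : 0 < b)
    (hθ1 : 1 < θ) (hθ2 : θ ≤ 2) :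
    (a + b) ^ θ ≥ a ^ θ + θ * b ^ θ := by
  have ha : 0 < a := lt_of_lt_of_le hb hab
  have hBer : 1 + θ * (b / a) ≤ (1 + b / a) ^ θ :=
    one_add_mul_self_le_rpow_one_add (by have := div_nonneg hb.le ha.le; linarith) hθ1.le
  have hsplit : (a + b) ^ θ = a ^ θ * (1 + b / a) ^ θ := by
    rw [← Real.mul_rpow ha.le (by positivity)]
    field_simp
  have h1 : a ^ θ * (1 + θ * (b / a)) ≤ (a + b) ^ θ := by
    rw [hsplit]
    exact mul_le_mul_of_nonneg_left hBer (Real.rpow_nonneg ha.le θ)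
  have hexp : a ^ θ * (1 + θ * (b / a)) = a ^ θ + θ * (a ^ (θ - 1) * b) := by
    have : a ^ θ * (b / a) = a ^ (θ - 1) * b := by
      rw [Real.rpow_sub ha, Real.rpow_one]
      field_simp
    rw [mul_add, mul_one, ← mul_assoc, mul_comm (a ^ θ) θ, mul_assoc, this]
  have h2 : b ^ θ ≤ a ^ (θ - 1) * b := by
    have : b ^ (θ - 1) * b = b ^ θ := by
      rw [Real.rpow_sub hb, Real.rpow_one]
      field_simp
    rw [← this]
    exact mul_le_mul_of_nonneg_right
      (Real.rpow_le_rpow hb.le hab (by linarith)) hb.le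
  calc a ^ θ + θ * b ^ θ ≤ a ^ θ + θ * (a ^ (θ - 1) * b) := by
        nlinarith
    _ = a ^ θ * (1 + θ * (b / a)) := hexp.symm
    _ ≤ (a + b) ^ θ := h1
end

section
/- Let Ω ⊂ ℝ^N be a bounded convex open set, s ∈ (1/2, 1), δ(x) = dist(x,∂Ω), d_ν(x) = inf{|t| : x+tν ∉ Ω}, and dω the normalized measure on S^{N−1}. Then for every x ∈ Ω, ∫_{S^{N−1}} d_ν(x)^{−2s} dω(ν) ≥ [Γ(N/2)Γ((1+2s)/2)/(√π Γ((N+2s)/2))] · δ(x)^{−2s}. -/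
open MeasureTheory

section AuxiliaryLemmas

open Real Set Metric
open scoped RealInnerProductSpace ENNReal

lemma aux_oneDim (p : ℝ) (hp : 0 < p) :
    ∫ t : ℝ, |t| ^ p * Real.exp (-t ^ 2) = Real.Gamma ((p + 1) / 2) := by
  have h2 : (0:ℝ) < 2 := two_pos
  have h := integral_rpow_mul_exp_neg_rpow h2 (by linarith : (-1:ℝ) < p)
  have hcongr : ∀ x ∈ Ioi (0:ℝ), x ^ p * Real.exp (-x ^ (2:ℝ)) = x ^ p * Real.exp (-x ^ 2) := by
    intro x _
    rw [show (2:ℝ) = ((2:ℕ):ℝ) by norm_num, Real.rpow_natCast]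
  rw [setIntegral_congr_fun measurableSet_Ioi hcongr] at h
  calc ∫ t : ℝ, |t| ^ p * Real.exp (-t ^ 2)
      = ∫ t : ℝ, (fun r : ℝ => r ^ p * Real.exp (-r ^ 2)) |t| := by
        refine integral_congr_ae (Filter.Eventually.of_forall fun t => ?_)
        simp [sq_abs]
    _ = 2 * ∫ t in Ioi (0:ℝ), t ^ p * Real.exp (-t ^ 2) := integral_comp_abs (f := fun r : ℝ => r ^ p * Real.exp (-r ^ 2))
    _ = Real.Gamma ((p + 1) / 2) := by rw [h]; ring

lemma aux_gauss1 : ∫ t : ℝ, Real.exp (-t ^ 2) = Real.sqrt π := by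
  simpa using integral_gaussian 1

lemma aux_I_coord (N : ℕ) (i₀ : Fin N) (p : ℝ) (hp : 0 < p) :
    ∫ x : EuclideanSpace ℝ (Fin N), |x i₀| ^ p * Real.exp (-‖x‖ ^ 2)
      = Real.Gamma ((p + 1) / 2) * Real.sqrt π ^ (N - 1) := by
  have key : ∀ x : EuclideanSpace ℝ (Fin N), |x i₀| ^ p * Real.exp (-‖x‖ ^ 2)
      = ∏ i : Fin N, (fun i (t : ℝ) => if i = i₀ then |t| ^ p * Real.exp (-t ^ 2)
          else Real.exp (-t ^ 2)) i (x i) := by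
    intro x
    rw [Finset.prod_eq_mul_prod_sdiff_singleton_of_mem (Finset.mem_univ i₀)]
    simp only [if_pos rfl, if_true]
    have h1 : ∀ i ∈ Finset.univ \ {i₀},
        (fun i (t : ℝ) => if i = i₀ then |t| ^ p * Real.exp (-t ^ 2)
          else Real.exp (-t ^ 2)) i (x i) = Real.exp (-(x i) ^ 2) := by
      intro i hi
      have : ¬ i = i₀ := by simpa using (Finset.mem_sdiff.mp hi).2
      simp only [this, if_false]
    rw [Finset.prod_congr rfl h1, ← Real.exp_sum]
    have hnorm : ‖x‖ ^ 2 = ∑ i, (x i) ^ 2 := by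
      rw [EuclideanSpace.norm_eq]
      rw [Real.sq_sqrt (Finset.sum_nonneg fun i _ => sq_nonneg _)]
      simp [sq_abs]
    have : -‖x‖ ^ 2 = -(x i₀) ^ 2 + ∑ i ∈ Finset.univ \ {i₀}, -(x i) ^ 2 := by
      rw [hnorm, Finset.sum_eq_add_sum_sdiff_singleton_of_mem (Finset.mem_univ i₀)
        (fun i => (x i) ^ 2), neg_add, ← Finset.sum_neg_distrib]
    rw [this, Real.exp_add]
    simp only [if_true]
    ring
  simp_rw [key]
  rw [← ((EuclideanSpace.volume_preserving_symm_measurableEquiv_toLp (Fin N)).symm).integral_comp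
    (MeasurableEquiv.measurableEmbedding _)]
  have : ∀ y : Fin N → ℝ, (∏ i : Fin N, (fun i (t : ℝ) => if i = i₀ then |t| ^ p * Real.exp (-t ^ 2)
          else Real.exp (-t ^ 2)) i (((MeasurableEquiv.toLp 2 (Fin N → ℝ)).symm.symm y) i))
      = ∏ i : Fin N, (fun i (t : ℝ) => if i = i₀ then |t| ^ p * Real.exp (-t ^ 2)
          else Real.exp (-t ^ 2)) i (y i) := fun y => rfl
  simp_rw [this]
  rw [MeasureTheory.integral_fintype_prod_volume_eq_prod (𝕜 := ℝ)
    (f := fun i (t : ℝ) => if i = i₀ then |t| ^ p * Real.exp (-t ^ 2) else Real.exp (-t ^ 2))]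
  rw [Finset.prod_eq_mul_prod_sdiff_singleton_of_mem (Finset.mem_univ i₀)]
  simp only [if_pos rfl, if_true]
  rw [aux_oneDim p hp]
  congr 1
  have h1 : ∀ i ∈ Finset.univ \ {i₀},
      (∫ t : ℝ, if i = i₀ then |t| ^ p * Real.exp (-t ^ 2) else Real.exp (-t ^ 2))
        = Real.sqrt π := by
    intro i hi
    simp only [if_neg (by simpa using (Finset.mem_sdiff.mp hi).2)]
    exact aux_gauss1
  rw [Finset.prod_congr rfl h1, Finset.prod_const]
  congr 1
  simp [Finset.card_sdiff]

lemma aux_I (N : ℕ) (hN : 1 ≤ N) (p : ℝ) (hp : 0 < p) (e : EuclideanSpace ℝ (Fin N))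
    (he : ‖e‖ = 1) :
    ∫ x : EuclideanSpace ℝ (Fin N), |⟪e, x⟫| ^ p * Real.exp (-‖x‖ ^ 2)
      = Real.Gamma ((p + 1) / 2) * Real.sqrt π ^ (N - 1) := by
  set i₀ : Fin N := ⟨0, hN⟩
  set e₁ : EuclideanSpace ℝ (Fin N) := EuclideanSpace.single i₀ (1 : ℝ) with he₁
  have hne₁ : ‖e₁‖ = 1 := by simp [he₁, EuclideanSpace.norm_single]
  set f := Submodule.reflection (ℝ ∙ (e - e₁))ᗮ with hf
  have hfe : f e = e₁ := Submodule.reflection_sub (by rw [he, hne₁])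
  have hmp : MeasurePreserving f volume volume := f.measurePreserving
  have hkey := hmp.integral_comp f.toHomeomorph.measurableEmbedding
    (fun y => |⟪e, y⟫| ^ p * Real.exp (-‖y‖ ^ 2))
  rw [← hkey]
  have : ∀ x : EuclideanSpace ℝ (Fin N),
      |⟪e, f x⟫| ^ p * Real.exp (-‖f x‖ ^ 2) = |x i₀| ^ p * Real.exp (-‖x‖ ^ 2) := by
    intro x
    have h1 : ⟪e, f x⟫ = ⟪f e, x⟫ := by
      conv_lhs => rw [show e = f (f e) from (Submodule.reflection_reflection _ e).symm]
      rw [f.inner_map_map]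
    rw [h1, hfe, f.norm_map]
    congr 2
    simp [he₁, EuclideanSpace.inner_single_left]
  simp_rw [this]
  exact aux_I_coord N i₀ p hp

lemma aux_radial (N : ℕ) (hN : 1 ≤ N) (p : ℝ) (hp : 0 < p) :
    ∫ r : Ioi (0:ℝ), (r : ℝ) ^ p * Real.exp (-(r:ℝ) ^ 2) ∂(Measure.volumeIoiPow (N - 1))
      = (1 / 2) * Real.Gamma ((N + p) / 2) := by
  simp only [Measure.volumeIoiPow, ENNReal.ofReal]
  rw [integral_withDensity_eq_integral_smul
    ((measurable_subtype_coe.pow_const _).real_toNNReal),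
    integral_subtype_comap measurableSet_Ioi
      (fun a : ℝ => Real.toNNReal (a ^ (N - 1)) • (a ^ p * Real.exp (-a ^ 2)))]
  have hcongr : ∀ r ∈ Ioi (0:ℝ),
      Real.toNNReal (r ^ (N - 1)) • (r ^ p * Real.exp (-r ^ 2))
        = r ^ ((((N:ℝ) - 1) + p)) * Real.exp (-r ^ (2:ℝ)) := by
    intro r hr
    have hr0 : (0:ℝ) < r := hr
    rw [NNReal.smul_def, Real.coe_toNNReal _ (pow_nonneg hr0.le _), smul_eq_mul]
    rw [show (2:ℝ) = ((2:ℕ):ℝ) by norm_num, Real.rpow_natCast]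
    rw [Real.rpow_add hr0, ← Real.rpow_natCast r (N - 1)]
    rw [Nat.cast_sub hN, Nat.cast_one]
    ring
  rw [setIntegral_congr_fun measurableSet_Ioi hcongr,
    integral_rpow_mul_exp_neg_rpow two_pos (by have h1 : (1:ℝ) ≤ (N:ℝ) := Nat.one_le_cast.mpr hN; linarith)]
  norm_num
  ring_nf

lemma aux_polar (N : ℕ) (hN : 1 ≤ N) (p : ℝ) (hp : 0 < p) (e : EuclideanSpace ℝ (Fin N)) :
    ∫ x : EuclideanSpace ℝ (Fin N), |⟪e, x⟫| ^ p * Real.exp (-‖x‖ ^ 2)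
      = (∫ ν : sphere (0 : EuclideanSpace ℝ (Fin N)) 1,
          |⟪e, (ν : EuclideanSpace ℝ (Fin N))⟫| ^ p
            ∂((volume : Measure (EuclideanSpace ℝ (Fin N))).toSphere))
        * ((1 / 2) * Real.Gamma ((N + p) / 2)) := by
  haveI : Nonempty (Fin N) := ⟨⟨0, hN⟩⟩
  haveI : Nontrivial (EuclideanSpace ℝ (Fin N)) :=
    ⟨0, EuclideanSpace.single ⟨0, hN⟩ (1:ℝ), by
      intro h
      have := congrArg (fun v : EuclideanSpace ℝ (Fin N) => v ⟨0, hN⟩) h.symm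
      simp [EuclideanSpace.single_apply] at this⟩
  let E := EuclideanSpace ℝ (Fin N)
  let μ : Measure E := volume
  show ∫ x : E, |⟪e, x⟫| ^ p * Real.exp (-‖x‖ ^ 2) ∂μ = _
  have hdim : Module.finrank ℝ E = N := by
    simp [E, finrank_euclideanSpace]
  set g : sphere (0 : E) 1 × Ioi (0:ℝ) → ℝ :=
    fun z => |⟪e, (z.1 : E)⟫| ^ p * ((z.2 : ℝ) ^ p * Real.exp (-(z.2 : ℝ) ^ 2)) with hg
  calc ∫ x : E, |⟪e, x⟫| ^ p * Real.exp (-‖x‖ ^ 2)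
      = ∫ x : ({(0:E)}ᶜ : Set E), |⟪e, (x:E)⟫| ^ p * Real.exp (-‖(x:E)‖ ^ 2) ∂(μ.comap (↑)) := by
        rw [integral_subtype_comap (measurableSet_singleton (0:E)).compl
          (fun x : E => |⟪e, x⟫| ^ p * Real.exp (-‖x‖ ^ 2)), MeasureTheory.restrict_compl_singleton]
    _ = ∫ z, g z ∂(μ.toSphere.prod (Measure.volumeIoiPow (Module.finrank ℝ E - 1))) := by
        rw [← μ.measurePreserving_homeomorphUnitSphereProd.integral_comp
          (Homeomorph.measurableEmbedding _) g]
        refine integral_congr_ae (Filter.Eventually.of_forall fun x => ?_)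
        have hx0 : (x : E) ≠ 0 := x.2
        have hxn : (0:ℝ) < ‖(x:E)‖ := norm_pos_iff.mpr hx0
        simp only [hg, homeomorphUnitSphereProd_apply_fst_coe,
          homeomorphUnitSphereProd_apply_snd_coe]
        rw [real_inner_smul_right, abs_mul, Real.mul_rpow (abs_nonneg _) (abs_nonneg _),
          abs_of_pos (inv_pos.mpr hxn)]
        rw [show (‖(x:E)‖⁻¹) ^ p * |⟪e, (x:E)⟫| ^ p * (‖(x:E)‖ ^ p * Real.exp (-‖(x:E)‖ ^ 2))
            = ((‖(x:E)‖⁻¹) ^ p * ‖(x:E)‖ ^ p) * (|⟪e, (x:E)⟫| ^ p * Real.exp (-‖(x:E)‖ ^ 2))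
          by ring]
        rw [← Real.mul_rpow (inv_nonneg.mpr hxn.le) hxn.le, inv_mul_cancel₀ hxn.ne',
          Real.one_rpow, one_mul]
    _ = (∫ ν : sphere (0 : E) 1, |⟪e, (ν : E)⟫| ^ p ∂μ.toSphere)
        * ∫ r : Ioi (0:ℝ), (r:ℝ) ^ p * Real.exp (-(r:ℝ) ^ 2)
            ∂(Measure.volumeIoiPow (Module.finrank ℝ E - 1)) := by
        rw [hg]
        exact integral_prod_mul (L := ℝ) (fun ν : sphere (0:E) 1 => |⟪e, (ν : E)⟫| ^ p)
          (fun r : Ioi (0:ℝ) => (r:ℝ) ^ p * Real.exp (-(r:ℝ) ^ 2))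
    _ = (∫ ν : sphere (0 : E) 1, |⟪e, (ν : E)⟫| ^ p ∂μ.toSphere)
        * ((1 / 2) * Real.Gamma ((N + p) / 2)) := by
        rw [hdim, aux_radial N hN p hp]

lemma aux_sphere_omega (N : ℕ) (hN : 1 ≤ N) (p : ℝ) (hp : 0 < p)
    (e : EuclideanSpace ℝ (Fin N)) (he : ‖e‖ = 1) :
    ∫ ν : sphere (0 : EuclideanSpace ℝ (Fin N)) 1,
        |⟪e, (ν : EuclideanSpace ℝ (Fin N))⟫| ^ p
        ∂((((volume : Measure (EuclideanSpace ℝ (Fin N))).toSphere Set.univ)⁻¹ •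
            (volume : Measure (EuclideanSpace ℝ (Fin N))).toSphere))
      = Real.Gamma (N / 2) * Real.Gamma ((p + 1) / 2)
          / (Real.sqrt π * Real.Gamma ((N + p) / 2)) := by
  haveI : Nonempty (Fin N) := ⟨⟨0, hN⟩⟩
  have hγ : (0:ℝ) < Real.Gamma ((N + p) / 2) := by
    apply Real.Gamma_pos_of_pos; positivity
  have hγN : (0:ℝ) < Real.Gamma (N / 2) := by
    apply Real.Gamma_pos_of_pos
    have : (0:ℝ) < N := by exact_mod_cast hN
    positivity
  have hsq : (0:ℝ) < Real.sqrt π := Real.sqrt_pos.mpr pi_pos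
  -- value of the sphere integral w.r.t. the unnormalized measure
  have hσ : ∫ ν : sphere (0 : EuclideanSpace ℝ (Fin N)) 1,
      |⟪e, (ν : EuclideanSpace ℝ (Fin N))⟫| ^ p
        ∂((volume : Measure (EuclideanSpace ℝ (Fin N))).toSphere)
      = Real.Gamma ((p + 1) / 2) * Real.sqrt π ^ (N - 1) / ((1 / 2) * Real.Gamma ((N + p) / 2)) := by
    rw [eq_div_iff (by positivity)]
    rw [← aux_polar N hN p hp e, aux_I N hN p hp e he]
  -- total mass of the sphere measure
  have hdim : Module.finrank ℝ (EuclideanSpace ℝ (Fin N)) = N := by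
    simp [finrank_euclideanSpace]
  have hball : (volume : Measure (EuclideanSpace ℝ (Fin N))) (ball 0 1)
      = ENNReal.ofReal (Real.sqrt π ^ N / Real.Gamma (N / 2 + 1)) := by
    rw [EuclideanSpace.volume_ball]
    simp [Fintype.card_fin]
  have huniv : ((volume : Measure (EuclideanSpace ℝ (Fin N))).toSphere Set.univ)
      = (N : ℝ≥0∞) * ENNReal.ofReal (Real.sqrt π ^ N / Real.Gamma (N / 2 + 1)) := by
    rw [Measure.toSphere_apply_univ, hdim, hball]
  have hΓN1 : (0:ℝ) < Real.Gamma (N / 2 + 1) := by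
    apply Real.Gamma_pos_of_pos
    have : (0:ℝ) < N := by exact_mod_cast hN
    positivity
  rw [integral_smul_measure, hσ, huniv, smul_eq_mul]
  have htoReal : ((((N : ℝ≥0∞)) * ENNReal.ofReal (Real.sqrt π ^ N / Real.Gamma (N / 2 + 1)))⁻¹).toReal
      = ((N:ℝ) * (Real.sqrt π ^ N / Real.Gamma (N / 2 + 1)))⁻¹ := by
    rw [ENNReal.toReal_inv, ENNReal.toReal_mul, ENNReal.toReal_natCast,
      ENNReal.toReal_ofReal (by positivity)]
  rw [htoReal]
  -- arithmetic
  have hΓrec : Real.Gamma (N / 2 + 1) = (N / 2) * Real.Gamma (N / 2) := by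
    rw [Real.Gamma_add_one]
    have : (0:ℝ) < N := by exact_mod_cast hN
    positivity
  have hpow : Real.sqrt π ^ N = Real.sqrt π ^ (N - 1) * Real.sqrt π := by
    conv_lhs => rw [show N = (N - 1) + 1 from (Nat.succ_pred_eq_of_pos hN).symm]
    rw [pow_succ]
  have hNpos : (0:ℝ) < N := by exact_mod_cast hN
  rw [hΓrec, hpow]
  field_simp

variable {E' : Type*} [NormedAddCommGroup E'] [NormedSpace ℝ E']

lemma aux_d_min {Ω : Set E'} (hΩopen : IsOpen Ω) (hΩconv : Convex ℝ Ω)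
    (hΩbdd : Bornology.IsBounded Ω) {x : E'} (hx : x ∈ Ω) {ν : E'} (hν : ν ≠ 0) :
    sInf {r : ℝ | ∃ t : ℝ, r = |t| ∧ x + t • ν ∉ Ω}
      = min (gauge ((x + ·) ⁻¹' Ω) ν)⁻¹ (gauge ((x + ·) ⁻¹' Ω) (-ν))⁻¹ := by
  set K : Set E' := (x + ·) ⁻¹' Ω with hK
  have hKopen : IsOpen K := hΩopen.preimage (continuous_add_left x)
  have hKconv : Convex ℝ K := hΩconv.translate_preimage_right x
  have hK0 : (0 : E') ∈ K := by simpa [hK] using hx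
  have hKbdd : Bornology.IsVonNBounded ℝ K := by
    rw [NormedSpace.isVonNBounded_iff ℝ]
    obtain ⟨R, hR⟩ := hΩbdd.subset_ball x
    refine (Metric.isBounded_ball (x := (0:E')) (r := R)).subset fun z hz => ?_
    have : x + z ∈ ball x R := hR hz
    simpa [mem_ball, dist_eq_norm] using this
  have habs : Absorbent ℝ K := absorbent_nhds_zero (hKopen.mem_nhds hK0)
  have hmem : ∀ z : E', z ∈ K ↔ gauge K z < 1 := by
    intro z
    conv_lhs => rw [← gauge_lt_one_eq_self_of_isOpen hKconv hK0 hKopen]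
    exact Iff.rfl
  have ha : 0 < gauge K ν := (gauge_pos habs hKbdd).mpr hν
  have hb : 0 < gauge K (-ν) := (gauge_pos habs hKbdd).mpr (neg_ne_zero.mpr hν)
  set a := gauge K ν
  set b := gauge K (-ν)
  have hmemt : ∀ t : ℝ, (x + t • ν ∈ Ω) ↔ gauge K (t • ν) < 1 := fun t => hmem (t • ν)
  have hgpos : ∀ t : ℝ, 0 ≤ t → gauge K (t • ν) = t * a := fun t ht =>
    gauge_smul_of_nonneg ht ν
  have hgneg : ∀ t : ℝ, t ≤ 0 → gauge K (t • ν) = (-t) * b := by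
    intro t ht
    rw [show t • ν = (-t) • (-ν) by simp, gauge_smul_of_nonneg (neg_nonneg.mpr ht)]
    rfl
  apply le_antisymm
  · -- min is in the set
    apply csInf_le
    · refine ⟨min a⁻¹ b⁻¹, fun r hr => ?_⟩
      obtain ⟨t, rfl, hbad⟩ := hr
      rcases le_or_gt 0 t with ht | ht
      · rw [hmemt, hgpos t ht, not_lt] at hbad
        have : a⁻¹ ≤ t := by
          rw [inv_le_iff_one_le_mul₀ ha]
          linarith [hbad]
        calc min a⁻¹ b⁻¹ ≤ a⁻¹ := min_le_left _ _
          _ ≤ t := this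
          _ ≤ |t| := le_abs_self t
      · rw [hmemt, hgneg t ht.le, not_lt] at hbad
        have : b⁻¹ ≤ -t := by
          rw [inv_le_iff_one_le_mul₀ hb]
          linarith [hbad]
        calc min a⁻¹ b⁻¹ ≤ b⁻¹ := min_le_right _ _
          _ ≤ -t := this
          _ ≤ |t| := neg_le_abs t
    · rcases le_total a⁻¹ b⁻¹ with h | h
      · refine ⟨a⁻¹, ?_, ?_⟩
        · rw [abs_of_nonneg (by positivity)]
          exact min_eq_left h
        · rw [hmemt, hgpos _ (by positivity), inv_mul_cancel₀ ha.ne']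
          simp
      · refine ⟨-b⁻¹, ?_, ?_⟩
        · rw [abs_neg, abs_of_nonneg (by positivity)]
          rw [min_eq_right h]
        · rw [hmemt, hgneg _ (neg_nonpos.mpr (by positivity)), neg_neg, inv_mul_cancel₀ hb.ne']
          simp
  · -- min is a lower bound
    apply le_csInf
    · refine ⟨a⁻¹, a⁻¹, ?_, ?_⟩
      · rw [abs_of_nonneg (by positivity)]
      · rw [hmemt, hgpos _ (by positivity), inv_mul_cancel₀ ha.ne']
        simp
    · rintro r ⟨t, rfl, hbad⟩
      rcases le_or_gt 0 t with ht | ht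
      · rw [hmemt, hgpos t ht, not_lt] at hbad
        have : a⁻¹ ≤ t := by
          rw [inv_le_iff_one_le_mul₀ ha]
          linarith [hbad]
        calc min a⁻¹ b⁻¹ ≤ a⁻¹ := min_le_left _ _
          _ ≤ t := this
          _ ≤ |t| := le_abs_self t
      · rw [hmemt, hgneg t ht.le, not_lt] at hbad
        have : b⁻¹ ≤ -t := by
          rw [inv_le_iff_one_le_mul₀ hb]
          linarith [hbad]
        calc min a⁻¹ b⁻¹ ≤ b⁻¹ := min_le_right _ _
          _ ≤ -t := this
          _ ≤ |t| := neg_le_abs t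

end AuxiliaryLemmas

section Main

open Real Set Metric
open scoped RealInnerProductSpace ENNReal

/-- For a bounded convex open set `Ω ⊂ ℝ^N`, `s ∈ (1/2,1)`, `δ(x) = dist(x,∂Ω)`,
`d_ν(x) = inf{|t| : x+tν ∉ Ω}`, and `dω` the normalized surface measure on
`S^{N−1}`: for every `x ∈ Ω`,
`∫ d_ν(x)^{−2s} dω(ν) ≥ [Γ(N/2)Γ((1+2s)/2)/(√π Γ((N+2s)/2))]·δ(x)^{−2s}`. -/
theorem convex_integral_dist_rpow_neg_ge (N : ℕ) (hN : 1 ≤ N) (s : ℝ)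
    (hs : 1 / 2 < s) (hs1 : s < 1)
    (Ω : Set (EuclideanSpace ℝ (Fin N))) (hΩopen : IsOpen Ω) (hΩconv : Convex ℝ Ω)
    (hΩbdd : Bornology.IsBounded Ω)
    (ω : Measure (Metric.sphere (0 : EuclideanSpace ℝ (Fin N)) 1))
    (hω : ω = ((volume : Measure (EuclideanSpace ℝ (Fin N))).toSphere Set.univ)⁻¹ •
      (volume : Measure (EuclideanSpace ℝ (Fin N))).toSphere) :
    ∀ x ∈ Ω,
      ∫ ν : Metric.sphere (0 : EuclideanSpace ℝ (Fin N)) 1,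
          (sInf {r : ℝ | ∃ t : ℝ, r = |t| ∧ x + t • (ν : EuclideanSpace ℝ (Fin N)) ∉ Ω})
            ^ (-(2 * s)) ∂ω
        ≥ (Real.Gamma (N / 2) * Real.Gamma ((1 + 2 * s) / 2) /
            (Real.sqrt Real.pi * Real.Gamma ((N + 2 * s) / 2))) *
            (Metric.infDist x (frontier Ω)) ^ (-(2 * s)) := by
  intro x hx
  haveI : Nonempty (Fin N) := ⟨⟨0, hN⟩⟩
  have hs0 : (0:ℝ) < 2 * s := by linarith
  -- the translated set and its gauge
  set K : Set (EuclideanSpace ℝ (Fin N)) := (x + ·) ⁻¹' Ω with hK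
  have hKopen : IsOpen K := hΩopen.preimage (continuous_add_left x)
  have hKconv : Convex ℝ K := hΩconv.translate_preimage_right x
  have hK0 : (0 : (EuclideanSpace ℝ (Fin N))) ∈ K := by simpa [hK] using hx
  have hKnhds : K ∈ nhds (0:(EuclideanSpace ℝ (Fin N))) := hKopen.mem_nhds hK0
  have habs : Absorbent ℝ K := absorbent_nhds_zero hKnhds
  have hKbdd : Bornology.IsVonNBounded ℝ K := by
    rw [NormedSpace.isVonNBounded_iff ℝ]
    obtain ⟨R, hR⟩ := hΩbdd.subset_ball x
    refine (Metric.isBounded_ball (x := (0:(EuclideanSpace ℝ (Fin N)))) (r := R)).subset fun z hz => ?_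
    have : x + z ∈ ball x R := hR hz
    simpa [mem_ball, dist_eq_norm] using this
  have hgpos : ∀ v : (EuclideanSpace ℝ (Fin N)), v ≠ 0 → 0 < gauge K v := fun v hv => (gauge_pos habs hKbdd).mpr hv
  have hmemK : ∀ z : (EuclideanSpace ℝ (Fin N)), z ∈ K ↔ gauge K z < 1 := by
    intro z
    conv_lhs => rw [← gauge_lt_one_eq_self_of_isOpen hKconv hK0 hKopen]
    exact Iff.rfl
  -- distance to the boundary
  set δ := Metric.infDist x (frontier Ω) with hδ
  have hΩne_univ : Ω ≠ univ := by
    intro h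
    exact NormedSpace.unbounded_univ ℝ (EuclideanSpace ℝ (Fin N)) (h ▸ hΩbdd)
  obtain ⟨y, hyf, hyd⟩ := exists_mem_frontier_infDist_compl_eq_dist hx hΩne_univ
  have hfne : (frontier Ω).Nonempty := ⟨y, hyf⟩
  have hsub : frontier Ω ⊆ Ωᶜ := by
    intro z hz
    rw [hΩopen.frontier_eq] at hz
    exact hz.2
  have hδc : Metric.infDist x Ωᶜ ≤ δ := Metric.infDist_le_infDist_of_subset hsub hfne
  have hδ_le : δ ≤ dist x y := Metric.infDist_le_dist_of_mem hyf
  have hδeq : δ = Metric.infDist x Ωᶜ := le_antisymm (hyd ▸ hδ_le) hδc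
  have hδy : δ = dist x y := hδeq.trans hyd
  have hδpos : 0 < δ := by
    rw [hδeq]
    refine ((hΩopen.isClosed_compl).notMem_iff_infDist_pos ⟨y, hsub hyf⟩).mp ?_
    simpa using hx
  have hballK : ball (0:(EuclideanSpace ℝ (Fin N))) δ ⊆ K := by
    intro z hz
    have h1 : x + z ∈ ball x δ := by
      simpa [mem_ball, dist_eq_norm] using hz
    have h2 : ball x δ ⊆ Ω := by
      rw [hδeq]
      exact Metric.ball_infDist_compl_subset
    exact h2 h1
  -- separating functional
  have hynotin : y ∉ Ω := hsub hyf
  obtain ⟨f, hf⟩ := geometric_hahn_banach_open_point hΩconv hΩopen hynotin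
  set e₀ : (EuclideanSpace ℝ (Fin N)) := (InnerProductSpace.toDual ℝ (EuclideanSpace ℝ (Fin N))).symm f with he₀def
  have he₀ : ∀ z : (EuclideanSpace ℝ (Fin N)), ⟪e₀, z⟫ = f z := fun z => InnerProductSpace.toDual_symm_apply
  have hfx : f x < f y := hf x hx
  have he₀ne : e₀ ≠ 0 := by
    intro h
    have h1 : f x = 0 := by rw [← he₀ x, h, inner_zero_left]
    have h2 : f y = 0 := by rw [← he₀ y, h, inner_zero_left]
    rw [h1, h2] at hfx
    exact lt_irrefl _ hfx
  have hn₀ : 0 < ‖e₀‖ := norm_pos_iff.mpr he₀ne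
  set e : (EuclideanSpace ℝ (Fin N)) := ‖e₀‖⁻¹ • e₀ with hedef
  have he : ‖e‖ = 1 := by
    rw [hedef, norm_smul, norm_inv, norm_norm, inv_mul_cancel₀ hn₀.ne']
  have hkey : ∀ ν : (EuclideanSpace ℝ (Fin N)), ∀ t : ℝ, x + t • ν ∈ Ω → t * ⟪e, ν⟫ < δ := by
    intro ν t hm
    have h1 : f (x + t • ν) < f y := hf _ hm
    have h2 : t * f ν < f y - f x := by
      rw [map_add, _root_.map_smul, smul_eq_mul] at h1
      linarith
    have h3 : f y - f x ≤ ‖e₀‖ * δ := by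
      have : f y - f x = ⟪e₀, y - x⟫ := by rw [he₀, map_sub]
      rw [this]
      calc ⟪e₀, y - x⟫ ≤ ‖e₀‖ * ‖y - x‖ := real_inner_le_norm _ _
        _ = ‖e₀‖ * δ := by rw [hδy, dist_eq_norm, norm_sub_rev]
    have h4 : t * ⟪e, ν⟫ = ‖e₀‖⁻¹ * (t * f ν) := by
      rw [hedef, real_inner_smul_left, he₀]
      ring
    rw [h4]
    calc ‖e₀‖⁻¹ * (t * f ν) < ‖e₀‖⁻¹ * (‖e₀‖ * δ) := by
          exact mul_lt_mul_of_pos_left (lt_of_lt_of_le h2 h3) (inv_pos.mpr hn₀)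
      _ = δ := by
          rw [← mul_assoc, inv_mul_cancel₀ hn₀.ne', one_mul]
  -- the distance function
  set D : sphere (0:(EuclideanSpace ℝ (Fin N))) 1 → ℝ := fun ν => min (gauge K (ν:(EuclideanSpace ℝ (Fin N))))⁻¹ (gauge K (-(ν:(EuclideanSpace ℝ (Fin N)))))⁻¹ with hD
  have hνne : ∀ ν : sphere (0:(EuclideanSpace ℝ (Fin N))) 1, (ν : (EuclideanSpace ℝ (Fin N))) ≠ 0 := fun ν =>
    ne_of_mem_sphere ν.2 one_ne_zero
  have hd_eq : ∀ ν : sphere (0:(EuclideanSpace ℝ (Fin N))) 1,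
      sInf {r : ℝ | ∃ t : ℝ, r = |t| ∧ x + t • (ν : (EuclideanSpace ℝ (Fin N))) ∉ Ω} = D ν := fun ν =>
    aux_d_min hΩopen hΩconv hΩbdd hx (hνne ν)
  have hDpos : ∀ ν : sphere (0:(EuclideanSpace ℝ (Fin N))) 1, 0 < D ν := fun ν =>
    lt_min (inv_pos.mpr (hgpos _ (hνne ν))) (inv_pos.mpr (hgpos _ (neg_ne_zero.mpr (hνne ν))))
  -- membership below the exit time
  have hmem_of_lt : ∀ ν : sphere (0:(EuclideanSpace ℝ (Fin N))) 1, ∀ t : ℝ, |t| < D ν → x + t • (ν:(EuclideanSpace ℝ (Fin N))) ∈ Ω := by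
    intro ν t ht
    rcases le_or_gt 0 t with h0 | h0
    · have h1 : t < (gauge K (ν:(EuclideanSpace ℝ (Fin N))))⁻¹ := lt_of_lt_of_le ((abs_of_nonneg h0) ▸ ht) (min_le_left _ _)
      have hg := hgpos _ (hνne ν)
      have h2 : gauge K (t • (ν:(EuclideanSpace ℝ (Fin N)))) < 1 := by
        rw [gauge_smul_of_nonneg h0, smul_eq_mul]
        calc t * gauge K (ν:(EuclideanSpace ℝ (Fin N)))
            < (gauge K (ν:(EuclideanSpace ℝ (Fin N))))⁻¹ * gauge K (ν:(EuclideanSpace ℝ (Fin N))) :=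
              mul_lt_mul_of_pos_right h1 hg
          _ = 1 := inv_mul_cancel₀ hg.ne'
      have : t • (ν:(EuclideanSpace ℝ (Fin N))) ∈ K := (hmemK _).mpr h2
      simpa [hK] using this
    · have h1 : -t < (gauge K (-(ν:(EuclideanSpace ℝ (Fin N)))))⁻¹ :=
        lt_of_lt_of_le ((abs_of_neg h0) ▸ ht) (min_le_right _ _)
      have hg := hgpos _ (neg_ne_zero.mpr (hνne ν))
      have h2 : gauge K (t • (ν:(EuclideanSpace ℝ (Fin N)))) < 1 := by
        rw [show t • (ν:(EuclideanSpace ℝ (Fin N))) = (-t) • (-(ν:(EuclideanSpace ℝ (Fin N)))) by simp,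
          gauge_smul_of_nonneg (by linarith), smul_eq_mul]
        calc (-t) * gauge K (-(ν:(EuclideanSpace ℝ (Fin N))))
            < (gauge K (-(ν:(EuclideanSpace ℝ (Fin N)))))⁻¹ * gauge K (-(ν:(EuclideanSpace ℝ (Fin N)))) :=
              mul_lt_mul_of_pos_right h1 hg
          _ = 1 := inv_mul_cancel₀ hg.ne'
      have : t • (ν:(EuclideanSpace ℝ (Fin N))) ∈ K := (hmemK _).mpr h2
      simpa [hK] using this
  -- the key convexity bound
  have hDle : ∀ ν : sphere (0:(EuclideanSpace ℝ (Fin N))) 1, D ν * |⟪e, (ν:(EuclideanSpace ℝ (Fin N)))⟫| ≤ δ := by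
    intro ν
    by_contra hcon
    push_neg at hcon
    have hc0 : 0 < |⟪e, (ν:(EuclideanSpace ℝ (Fin N)))⟫| := by
      rcases (abs_nonneg ⟪e, (ν:(EuclideanSpace ℝ (Fin N)))⟫).lt_or_eq with h | h
      · exact h
      · exfalso; rw [← h, mul_zero] at hcon; exact absurd hcon (not_lt.mpr hδpos.le)
    have hlt : δ / |⟪e, (ν:(EuclideanSpace ℝ (Fin N)))⟫| < D ν := (div_lt_iff₀ hc0).mpr (by linarith [hcon])
    obtain ⟨r, hr1, hr2⟩ := exists_between hlt
    have hrpos : 0 < r := lt_trans (by positivity) hr1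
    set t : ℝ := if 0 ≤ ⟪e, (ν:(EuclideanSpace ℝ (Fin N)))⟫ then r else -r with htdef
    have habs_t : |t| = r := by
      rw [htdef]; split <;> simp [abs_of_pos hrpos, abs_of_neg (neg_neg_iff_pos.mpr hrpos)]
    have hmem' : x + t • (ν:(EuclideanSpace ℝ (Fin N))) ∈ Ω := hmem_of_lt ν t (habs_t ▸ hr2)
    have hlt' : t * ⟪e, (ν:(EuclideanSpace ℝ (Fin N)))⟫ < δ := hkey _ t hmem'
    have heq : t * ⟪e, (ν:(EuclideanSpace ℝ (Fin N)))⟫ = r * |⟪e, (ν:(EuclideanSpace ℝ (Fin N)))⟫| := by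
      rw [htdef]
      rcases le_or_gt 0 ⟪e, (ν:(EuclideanSpace ℝ (Fin N)))⟫ with h | h
      · rw [if_pos h, abs_of_nonneg h]
      · rw [if_neg (not_le.mpr h), abs_of_neg h]; ring
    rw [heq] at hlt'
    have : δ < r * |⟪e, (ν:(EuclideanSpace ℝ (Fin N)))⟫| := (div_lt_iff₀ hc0).mp hr1
    linarith
  -- pointwise estimate
  have hpt : ∀ ν : sphere (0:(EuclideanSpace ℝ (Fin N))) 1,
      δ ^ (-(2*s)) * |⟪e, (ν:(EuclideanSpace ℝ (Fin N)))⟫| ^ (2*s) ≤ (D ν) ^ (-(2*s)) := by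
    intro ν
    rcases eq_or_lt_of_le (abs_nonneg ⟪e, (ν:(EuclideanSpace ℝ (Fin N)))⟫) with h | hc0
    · rw [← h, Real.zero_rpow hs0.ne', mul_zero]
      exact Real.rpow_nonneg (hDpos ν).le _
    · have hle : D ν ≤ δ / |⟪e, (ν:(EuclideanSpace ℝ (Fin N)))⟫| := (le_div_iff₀ hc0).mpr (hDle ν)
      have h1 : (δ / |⟪e, (ν:(EuclideanSpace ℝ (Fin N)))⟫|) ^ (-(2*s)) ≤ (D ν) ^ (-(2*s)) :=
        Real.rpow_le_rpow_of_nonpos (hDpos ν) hle (by linarith)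
      calc δ ^ (-(2*s)) * |⟪e, (ν:(EuclideanSpace ℝ (Fin N)))⟫| ^ (2*s)
          = (δ / |⟪e, (ν:(EuclideanSpace ℝ (Fin N)))⟫|) ^ (-(2*s)) := by
            rw [Real.div_rpow hδpos.le (abs_nonneg _), Real.rpow_neg (abs_nonneg _)]
            field_simp
        _ ≤ (D ν) ^ (-(2*s)) := h1
  -- integration
  have hinteq : (fun ν : sphere (0:(EuclideanSpace ℝ (Fin N))) 1 =>
      (sInf {r : ℝ | ∃ t : ℝ, r = |t| ∧ x + t • (ν : (EuclideanSpace ℝ (Fin N))) ∉ Ω})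
        ^ (-(2 * s))) = fun ν => (D ν) ^ (-(2 * s)) :=
    funext fun ν => by rw [hd_eq ν]
  have hgc : Continuous fun ν : sphere (0:(EuclideanSpace ℝ (Fin N))) 1 =>
      gauge K (ν:(EuclideanSpace ℝ (Fin N))) :=
    (continuous_gauge hKconv hKnhds).comp continuous_subtype_val
  have hgc' : Continuous fun ν : sphere (0:(EuclideanSpace ℝ (Fin N))) 1 =>
      gauge K (-(ν:(EuclideanSpace ℝ (Fin N)))) :=
    (continuous_gauge hKconv hKnhds).comp continuous_subtype_val.neg
  have hDcont : Continuous D :=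
    Continuous.min (hgc.inv₀ fun ν => (hgpos _ (hνne ν)).ne')
      (hgc'.inv₀ fun ν => (hgpos _ (neg_ne_zero.mpr (hνne ν))).ne')
  have hFcont : Continuous fun ν => (D ν) ^ (-(2 * s)) :=
    hDcont.rpow_const fun ν => Or.inl (hDpos ν).ne'
  have hLcont : Continuous fun ν : sphere (0:(EuclideanSpace ℝ (Fin N))) 1 =>
      δ ^ (-(2 * s)) * |⟪e, (ν:(EuclideanSpace ℝ (Fin N)))⟫| ^ (2 * s) :=
    continuous_const.mul (((continuous_const.inner continuous_subtype_val).abs).rpow_const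
      fun ν => Or.inr hs0.le)
  have hFint : Integrable (fun ν => (D ν) ^ (-(2 * s)))
      ((volume : Measure (EuclideanSpace ℝ (Fin N))).toSphere) :=
    hFcont.integrable_of_hasCompactSupport (HasCompactSupport.of_compactSpace _)
  have hLint : Integrable (fun ν : sphere (0:(EuclideanSpace ℝ (Fin N))) 1 =>
      δ ^ (-(2 * s)) * |⟪e, (ν:(EuclideanSpace ℝ (Fin N)))⟫| ^ (2 * s))
      ((volume : Measure (EuclideanSpace ℝ (Fin N))).toSphere) :=
    hLcont.integrable_of_hasCompactSupport (HasCompactSupport.of_compactSpace _)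
  have hσ0 : ((volume : Measure (EuclideanSpace ℝ (Fin N))).toSphere) univ ≠ 0 := by
    rw [Measure.toSphere_apply_univ]
    refine mul_ne_zero ?_ ?_
    · simp only [ne_eq, Nat.cast_eq_zero]
      have : Module.finrank ℝ (EuclideanSpace ℝ (Fin N)) = N := by
        simp [finrank_euclideanSpace]
      rw [this]
      omega
    · exact (measure_ball_pos volume (0:(EuclideanSpace ℝ (Fin N))) one_pos).ne'
  have hc_ne_top : (((volume : Measure (EuclideanSpace ℝ (Fin N))).toSphere) univ)⁻¹ ≠ ⊤ :=
    ENNReal.inv_ne_top.mpr hσ0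
  have hFintω : Integrable (fun ν => (D ν) ^ (-(2 * s))) ω := by
    rw [hω]; exact hFint.smul_measure hc_ne_top
  have hLintω : Integrable (fun ν : sphere (0:(EuclideanSpace ℝ (Fin N))) 1 =>
      δ ^ (-(2 * s)) * |⟪e, (ν:(EuclideanSpace ℝ (Fin N)))⟫| ^ (2 * s)) ω := by
    rw [hω]; exact hLint.smul_measure hc_ne_top
  have hmono : ∫ ν, δ ^ (-(2 * s)) * |⟪e, (ν:(EuclideanSpace ℝ (Fin N)))⟫| ^ (2 * s) ∂ω
      ≤ ∫ ν, (D ν) ^ (-(2 * s)) ∂ω := integral_mono hLintω hFintω hpt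
  have hLval : ∫ ν, δ ^ (-(2 * s)) * |⟪e, (ν:(EuclideanSpace ℝ (Fin N)))⟫| ^ (2 * s) ∂ω
      = δ ^ (-(2 * s)) * (Real.Gamma (N / 2) * Real.Gamma ((2 * s + 1) / 2)
          / (Real.sqrt π * Real.Gamma ((N + 2 * s) / 2))) := by
    rw [integral_const_mul, hω, aux_sphere_omega N hN (2 * s) hs0 e he]
  rw [ge_iff_le, hinteq]
  calc Real.Gamma (N / 2) * Real.Gamma ((1 + 2 * s) / 2) /
        (Real.sqrt Real.pi * Real.Gamma ((N + 2 * s) / 2)) * δ ^ (-(2 * s))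
      = ∫ ν, δ ^ (-(2 * s)) * |⟪e, (ν:(EuclideanSpace ℝ (Fin N)))⟫| ^ (2 * s) ∂ω := by
        rw [hLval, add_comm (2 * s) 1]
        ring
    _ ≤ ∫ ν, (D ν) ^ (-(2 * s)) ∂ω := hmono

end Main
end

section
/- For s ∈ (1/2, 1) and N ≥ 1, let 𝔥_{N,s} = c_{N,s}·κ_{N,2s} where c_{N,s} = 2^{2s}π^{−N/2} s Γ((N+2s)/2)/Γ(1−s) and κ_{N,2s} = π^{(N−1)/2}·[Γ((1+2s)/2)/Γ((N+2s)/2)]·(1/(2s))·[2^{1−2s}Γ(1−s)Γ((1+2s)/2)/√π − 1]. Then 𝔥_{N,s} → 1/4 as s → 1⁻, and 𝔥_{N,s} → 0 as s → (1/2)⁺. -/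
open Real Filter

private lemma gamma_cont {x : ℝ} (hx : 0 < x) : ContinuousAt Real.Gamma x := by
  refine (Real.differentiableAt_Gamma fun m => ?_).continuousAt
  intro h
  have : (0:ℝ) ≤ (m:ℝ) := Nat.cast_nonneg m
  nlinarith

private lemma key (N : ℕ) (hN : 1 ≤ N) {s : ℝ} (hs0 : 0 < s) (hs1 : s < 1) :
    (2 ^ (2 * s) * Real.pi ^ (-(N : ℝ) / 2) * s * Real.Gamma ((N + 2 * s) / 2) /
        Real.Gamma (1 - s)) *
      (Real.pi ^ (((N : ℝ) - 1) / 2) *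
        (Real.Gamma ((1 + 2 * s) / 2) / Real.Gamma ((N + 2 * s) / 2)) * (1 / (2 * s)) *
        (2 ^ (1 - 2 * s) * Real.Gamma (1 - s) * Real.Gamma ((1 + 2 * s) / 2) /
            Real.sqrt Real.pi - 1)) =
    Real.Gamma ((1 + 2 * s) / 2) ^ 2 / Real.pi -
      2 ^ (2 * s - 1) * Real.Gamma ((1 + 2 * s) / 2) * (1 - s) /
        (Real.sqrt Real.pi * Real.Gamma (2 - s)) := by
  have hπ : (0:ℝ) < Real.pi := Real.pi_pos
  have hA : (0:ℝ) < (N + 2 * s) / 2 := by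
    have : (1:ℝ) ≤ N := by exact_mod_cast hN
    linarith
  have ha : Real.Gamma ((N + 2 * s) / 2) ≠ 0 := (Real.Gamma_pos_of_pos hA).ne'
  have hc : Real.Gamma (1 - s) ≠ 0 := (Real.Gamma_pos_of_pos (by linarith)).ne'
  have h2s : Real.Gamma (2 - s) = (1 - s) * Real.Gamma (1 - s) := by
    have h := Real.Gamma_add_one (s := 1 - s) (by intro h; nlinarith [h] : (1:ℝ) - s ≠ 0)
    rw [show (1:ℝ) - s + 1 = 2 - s by ring] at h
    exact h
  have hsq : Real.sqrt Real.pi * Real.sqrt Real.pi = Real.pi := Real.mul_self_sqrt hπ.le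
  have hsqne : Real.sqrt Real.pi ≠ 0 := by positivity
  have hp2 : Real.pi ^ (((N:ℝ) - 1) / 2) ≠ 0 := (Real.rpow_pos_of_pos hπ _).ne'
  have e1 : Real.pi ^ (-(N : ℝ) / 2) =
      1 / (Real.sqrt Real.pi * Real.pi ^ (((N:ℝ) - 1) / 2)) := by
    rw [Real.sqrt_eq_rpow, ← Real.rpow_add hπ, one_div, ← Real.rpow_neg hπ.le]
    congr 1
    ring
  have e2 : (2:ℝ) ^ (1 - 2 * s) = ((2:ℝ) ^ (2 * s - 1))⁻¹ := by
    rw [← Real.rpow_neg (by norm_num)]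
    congr 1
    ring
  have e3 : (2:ℝ) ^ (2 * s) = 2 * (2:ℝ) ^ (2 * s - 1) := by
    rw [show (2:ℝ) * (2:ℝ) ^ (2 * s - 1) = (2:ℝ)^(1:ℝ) * (2:ℝ) ^ (2 * s - 1) by norm_num,
      ← Real.rpow_add (by norm_num)]
    congr 1
    ring
  have hu : ((2:ℝ) ^ (2 * s - 1)) ≠ 0 := (Real.rpow_pos_of_pos (by norm_num) _).ne'
  have h1s : (1:ℝ) - s ≠ 0 := by intro h; nlinarith
  rw [e1, e2, e3, h2s]
  set P := Real.pi ^ (((N:ℝ) - 1) / 2) with hP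
  set q := Real.sqrt Real.pi with hq
  rw [show Real.pi = q * q from hsq.symm]
  field_simp

private noncomputable def g (s : ℝ) : ℝ :=
  Real.Gamma ((1 + 2 * s) / 2) ^ 2 / Real.pi -
    2 ^ (2 * s - 1) * Real.Gamma ((1 + 2 * s) / 2) * (1 - s) /
      (Real.sqrt Real.pi * Real.Gamma (2 - s))

private lemma g_contAt {x : ℝ} (hx0 : 0 < x) (hx2 : x < 2) : ContinuousAt g x := by
  have hπ : (0:ℝ) < Real.pi := Real.pi_pos
  have hf1 : ContinuousAt (fun s : ℝ => (1 + 2 * s) / 2) x := by fun_prop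
  have hf2 : ContinuousAt (fun s : ℝ => 2 - s) x := by fun_prop
  have h1 : ContinuousAt (fun s : ℝ => Real.Gamma ((1 + 2 * s) / 2)) x :=
    ContinuousAt.comp (x := x) (g := Real.Gamma)
      (gamma_cont (by linarith : (0:ℝ) < (1 + 2 * x) / 2)) hf1
  have h2 : ContinuousAt (fun s : ℝ => Real.Gamma (2 - s)) x :=
    ContinuousAt.comp (x := x) (g := Real.Gamma)
      (gamma_cont (by linarith : (0:ℝ) < 2 - x)) hf2
  have h3 : ContinuousAt (fun s : ℝ => (2:ℝ) ^ (2 * s - 1)) x :=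
    ContinuousAt.comp (x := x) (g := ((2:ℝ) ^ ·))
      (Real.continuousAt_const_rpow (by norm_num : (2:ℝ) ≠ 0)) (by fun_prop)
  have hden : Real.sqrt Real.pi * Real.Gamma (2 - x) ≠ 0 :=
    mul_ne_zero (by positivity) (Real.Gamma_pos_of_pos (by linarith)).ne'
  exact ((h1.pow 2).div continuousAt_const hπ.ne').sub
    (((h3.mul h1).mul (by fun_prop)).div (continuousAt_const.mul h2) hden)

private lemma g_one : g 1 = 1 / 4 := by
  have hπ : (0:ℝ) < Real.pi := Real.pi_pos
  have h32 : Real.Gamma ((1 + 2 * 1) / 2) = Real.sqrt Real.pi / 2 := by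
    rw [show ((1:ℝ) + 2 * 1) / 2 = 1 / 2 + 1 by norm_num,
      Real.Gamma_add_one (by norm_num), Real.Gamma_one_half_eq]
    ring
  rw [g, h32]
  rw [div_pow, Real.sq_sqrt hπ.le]
  field_simp
  ring

private lemma g_half : g (1 / 2) = 0 := by
  have hπ : (0:ℝ) < Real.pi := Real.pi_pos
  have h1 : Real.Gamma ((1 + 2 * (1 / 2 : ℝ)) / 2) = 1 := by
    norm_num [Real.Gamma_one]
  have h2 : Real.Gamma (2 - (1 / 2 : ℝ)) = Real.sqrt Real.pi / 2 := by
    rw [show (2:ℝ) - 1 / 2 = 1 / 2 + 1 by norm_num,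
      Real.Gamma_add_one (by norm_num), Real.Gamma_one_half_eq]
    ring
  have h3 : (2:ℝ) ^ (2 * (1 / 2 : ℝ) - 1) = 1 := by
    norm_num
  rw [g, h1, h2, h3]
  have hsq : Real.sqrt Real.pi * Real.sqrt Real.pi = Real.pi := Real.mul_self_sqrt hπ.le
  have hsqne : Real.sqrt Real.pi ≠ 0 := by positivity
  field_simp
  linarith [hsq]

/-- For `N ≥ 1`, the sharp half-space fractional Hardy constant
`𝔥_{N,s} = c_{N,s}·κ_{N,2s}` (with the explicit Gamma-function formulas)
satisfies `𝔥_{N,s} → 1/4` as `s → 1⁻` and `𝔥_{N,s} → 0` as `s → (1/2)⁺`. -/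
theorem halfspace_hardy_constant_limits (N : ℕ) (hN : 1 ≤ N) :
    Tendsto
      (fun s : ℝ =>
        (2 ^ (2 * s) * Real.pi ^ (-(N : ℝ) / 2) * s * Real.Gamma ((N + 2 * s) / 2) /
            Real.Gamma (1 - s)) *
          (Real.pi ^ (((N : ℝ) - 1) / 2) *
            (Real.Gamma ((1 + 2 * s) / 2) / Real.Gamma ((N + 2 * s) / 2)) * (1 / (2 * s)) *
            (2 ^ (1 - 2 * s) * Real.Gamma (1 - s) * Real.Gamma ((1 + 2 * s) / 2) /
                Real.sqrt Real.pi - 1)))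
      (nhdsWithin 1 (Set.Iio 1)) (nhds (1 / 4)) ∧
    Tendsto
      (fun s : ℝ =>
        (2 ^ (2 * s) * Real.pi ^ (-(N : ℝ) / 2) * s * Real.Gamma ((N + 2 * s) / 2) /
            Real.Gamma (1 - s)) *
          (Real.pi ^ (((N : ℝ) - 1) / 2) *
            (Real.Gamma ((1 + 2 * s) / 2) / Real.Gamma ((N + 2 * s) / 2)) * (1 / (2 * s)) *
            (2 ^ (1 - 2 * s) * Real.Gamma (1 - s) * Real.Gamma ((1 + 2 * s) / 2) /
                Real.sqrt Real.pi - 1)))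
      (nhdsWithin (1 / 2) (Set.Ioi (1 / 2))) (nhds 0) := by
  constructor
  · have hev : ∀ᶠ s in nhdsWithin (1:ℝ) (Set.Iio 1),
        (2 ^ (2 * s) * Real.pi ^ (-(N : ℝ) / 2) * s * Real.Gamma ((N + 2 * s) / 2) /
            Real.Gamma (1 - s)) *
          (Real.pi ^ (((N : ℝ) - 1) / 2) *
            (Real.Gamma ((1 + 2 * s) / 2) / Real.Gamma ((N + 2 * s) / 2)) * (1 / (2 * s)) *
            (2 ^ (1 - 2 * s) * Real.Gamma (1 - s) * Real.Gamma ((1 + 2 * s) / 2) /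
                Real.sqrt Real.pi - 1)) = g s := by
      filter_upwards [self_mem_nhdsWithin,
        mem_nhdsWithin_of_mem_nhds (Ioi_mem_nhds (by norm_num : (0:ℝ) < 1))] with s hs1 hs0
      rw [key N hN hs0 hs1, g]
    refine Tendsto.congr' (Filter.EventuallyEq.symm hev) ?_
    have h := (g_contAt (by norm_num : (0:ℝ) < 1) (by norm_num : (1:ℝ) < 2)).tendsto
    rw [g_one] at h
    exact h.mono_left nhdsWithin_le_nhds
  · have hev : ∀ᶠ s in nhdsWithin (1/2 : ℝ) (Set.Ioi (1/2)),
        (2 ^ (2 * s) * Real.pi ^ (-(N : ℝ) / 2) * s * Real.Gamma ((N + 2 * s) / 2) /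
            Real.Gamma (1 - s)) *
          (Real.pi ^ (((N : ℝ) - 1) / 2) *
            (Real.Gamma ((1 + 2 * s) / 2) / Real.Gamma ((N + 2 * s) / 2)) * (1 / (2 * s)) *
            (2 ^ (1 - 2 * s) * Real.Gamma (1 - s) * Real.Gamma ((1 + 2 * s) / 2) /
                Real.sqrt Real.pi - 1)) = g s := by
      filter_upwards [self_mem_nhdsWithin,
        mem_nhdsWithin_of_mem_nhds (Iio_mem_nhds (by norm_num : (1/2:ℝ) < 1))] with s hs0 hs1
      rw [key N hN (by simpa using lt_trans (by norm_num : (0:ℝ) < 1/2) hs0) hs1, g]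
    refine Tendsto.congr' (Filter.EventuallyEq.symm hev) ?_
    have h := (g_contAt (by norm_num : (0:ℝ) < 1/2) (by norm_num : (1/2:ℝ) < 2)).tendsto
    rw [g_half] at h
    exact h.mono_left nhdsWithin_le_nhds
end
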